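/- The iterated matching-removal algorithm on a bipartite graph G is a (1 + k/(k+2))-approximation for the maximum k-dependent set problem: its output S is a k-dependent set of G with |I*_k| ≤ (1 + k/(k+2))·|S|, where I*_k is a maximum k-dependent set. -/

import Mathlib

open scoped Classical
set_option linter.unusedSectionVars false
set_option maxHeartbeats 1000000

variable {V : Type*} [Fintype V] [DecidableEq V]

/-- A matching of `G`, given as a finite set of edges of `G` that are pairwise vertex-disjoint. -/
def IsMatchingE (G : SimpleGraph V) (M : Finset (Sym2 V)) : Prop :=
  ↑M ⊆ G.edgeSet ∧ (M : Set (Sym2 V)).Pairwise fun e f => ∀ v, v ∈ e → v ∉ f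

/-- A maximum-cardinality matching of `G`. -/
def IsMaxMatchingE (G : SimpleGraph V) (M : Finset (Sym2 V)) : Prop :=
  IsMatchingE G M ∧ ∀ M', IsMatchingE G M' → M'.card ≤ M.card

/-- An independent set of `G`. -/
def IsIndepF (G : SimpleGraph V) (S : Finset V) : Prop :=
  ∀ v ∈ S, ∀ w ∈ S, ¬G.Adj v w

/-- A maximum-cardinality independent set of `G`. -/
def IsMaxIndepF (G : SimpleGraph V) (S : Finset V) : Prop :=
  IsIndepF G S ∧ ∀ S', IsIndepF G S' → S'.card ≤ S.card

/-- A `k`-dependent set: every vertex of the induced subgraph `G[S]` has degree at most `k`. -/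
def KDepSet (G : SimpleGraph V) (k : ℕ) (S : Finset V) : Prop :=
  ∀ v ∈ S, (S.filter fun w => G.Adj v w).card ≤ k

/-- A maximum-cardinality `k`-dependent set of `G`. -/
def IsMaxKDep (G : SimpleGraph V) (k : ℕ) (S : Finset V) : Prop :=
  KDepSet G k S ∧ ∀ T, KDepSet G k T → T.card ≤ S.card

/-- The edges of the induced subgraph `G[S]`. -/
noncomputable def inducedEdges (G : SimpleGraph V) (S : Finset V) : Finset (Sym2 V) :=
  G.edgeFinset.filter fun e => ∀ v ∈ e, v ∈ S

/-- The residual graph after deleting the matchings `M 0, ..., M (i-1)` from `G`. -/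
def resid (G : SimpleGraph V) (M : ℕ → Finset (Sym2 V)) (i : ℕ) : SimpleGraph V :=
  G.deleteEdges (⋃ j ∈ Set.Iio i, (M j : Set (Sym2 V)))

/-- The accumulated set of deleted edges `M 0 ∪ ... ∪ M (k-1)`. -/
def accumM (M : ℕ → Finset (Sym2 V)) (k : ℕ) : Finset (Sym2 V) :=
  (Finset.range k).biUnion M

lemma resid_edgeSet (G : SimpleGraph V) (M : ℕ → Finset (Sym2 V)) (i : ℕ) :
    (resid G M i).edgeSet = G.edgeSet \ (⋃ j ∈ Set.Iio i, (M j : Set (Sym2 V))) := by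
  simp [resid, SimpleGraph.edgeSet_deleteEdges]

lemma resid_mono (G : SimpleGraph V) (M : ℕ → Finset (Sym2 V)) {i j : ℕ} (h : i ≤ j) :
    (resid G M j).edgeSet ⊆ (resid G M i).edgeSet := by
  rw [resid_edgeSet, resid_edgeSet]
  apply Set.diff_subset_diff_right
  exact Set.biUnion_subset_biUnion_left (fun x hx => lt_of_lt_of_le hx h)

lemma resid_le (G : SimpleGraph V) (M : ℕ → Finset (Sym2 V)) (i : ℕ) :
    resid G M i ≤ G := SimpleGraph.deleteEdges_le _

lemma matching_eq_of_shared {X : Finset (Sym2 V)}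
    (hp : (X : Set (Sym2 V)).Pairwise fun e f => ∀ v, v ∈ e → v ∉ f)
    {e f : Sym2 V} (he : e ∈ X) (hf : f ∈ X) {v : V} (hv : v ∈ e) (hv' : v ∈ f) : e = f := by
  by_contra hne
  exact hp he hf hne v hv hv'

-- Part A : S is k-dependent

lemma partA (G : SimpleGraph V) (k : ℕ) (M : ℕ → Finset (Sym2 V))
    (hMm : ∀ i < k, (((M i) : Set (Sym2 V)).Pairwise fun e f => ∀ v, v ∈ e → v ∉ f))
    (S : Finset V) (hS : IsIndepF (resid G M k) S) : KDepSet G k S := by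
  intro v hv
  have hex : ∀ w ∈ S.filter (fun w => G.Adj v w), ∃ j, j < k ∧ s(v, w) ∈ M j := by
    intro w hw
    rw [Finset.mem_filter] at hw
    have hnadj := hS v hv w hw.1
    have : ¬ (G.Adj v w ∧ s(v, w) ∉ (⋃ j ∈ Set.Iio k, ((M j) : Set (Sym2 V)))) := by
      intro hc
      exact hnadj (by rw [resid, SimpleGraph.deleteEdges_adj]; exact hc)
    push_neg at this
    have hmem := this hw.2
    simp only [Set.mem_iUnion, Set.mem_Iio, Finset.coe_sort_coe, Finset.mem_coe] at hmem
    obtain ⟨j, hj, hjm⟩ := hmem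
    exact ⟨j, hj, hjm⟩
  classical
  have hinj : Set.InjOn (fun w => if h : ∃ j, j < k ∧ s(v, w) ∈ M j then h.choose else 0)
      (S.filter (fun w => G.Adj v w)) := by
    intro w hw w' hw' heq
    have h1 := hex w hw
    have h2 := hex w' hw'
    simp only [dif_pos h1, dif_pos h2] at heq
    have hc1 := h1.choose_spec
    have hc2 := h2.choose_spec
    rw [heq] at hc1
    by_contra hne
    have : s(v, w) ≠ s(v, w') := by
      simp only [ne_eq, Sym2.congr_right]; exact hne
    exact (hMm _ hc2.1) hc1.2 hc2.2 this v (Sym2.mem_mk_left v w) (Sym2.mem_mk_left v w')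
  calc (S.filter fun w => G.Adj v w).card
      ≤ (Finset.range k).card := by
        apply Finset.card_le_card_of_injOn _ _ hinj
        intro w hw
        have h1 := hex w hw
        simp only [dif_pos h1, Finset.mem_coe, Finset.mem_range]
        exact h1.choose_spec.1
    _ = k := Finset.card_range k

-- W-bound: a vertex-disjoint edge family has at most (filter internal).card + |univ \ T| edges

lemma wbound (T : Finset V) (X : Finset (Sym2 V))
    (hp : (X : Set (Sym2 V)).Pairwise fun e f => ∀ v, v ∈ e → v ∉ f) :
    X.card ≤ (X.filter fun e => ∀ v ∈ e, v ∈ T).card + (Finset.univ \ T).card := by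
  classical
  have hsplit := Finset.card_filter_add_card_filter_not
    (s := X) (p := fun e => ∀ v ∈ e, v ∈ T)
  rw [← hsplit]
  have : (X.filter fun e => ¬ ∀ v ∈ e, v ∈ T).card ≤ (Finset.univ \ T).card := by
    rcases (X.filter fun e => ¬ ∀ v ∈ e, v ∈ T).eq_empty_or_nonempty with hcase | hcase
    · rw [hcase]; simp
    haveI : Nonempty V := ⟨hcase.choose.out.1⟩
    have hex : ∀ e ∈ X.filter (fun e => ¬ ∀ v ∈ e, v ∈ T), ∃ v, v ∈ e ∧ v ∉ T := by
      intro e he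
      rw [Finset.mem_filter] at he
      push_neg at he
      exact he.2
    apply Finset.card_le_card_of_injOn
      (fun e => if h : ∃ v, v ∈ e ∧ v ∉ T then h.choose else Classical.arbitrary V)
    · intro e he
      have h1 := hex e he
      simp only [dif_pos h1, Finset.mem_coe, Finset.mem_sdiff, Finset.mem_univ, true_and]
      exact h1.choose_spec.2
    · intro e he f hf heq
      have h1 := hex e he
      have h2 := hex f hf
      simp only [dif_pos h1, dif_pos h2] at heq
      have hc1 := h1.choose_spec
      have hc2 := h2.choose_spec
      rw [heq] at hc1
      rw [Finset.mem_coe, Finset.mem_filter] at he hf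
      exact matching_eq_of_shared hp he.1 hf.1 hc1.1 hc2.1
  omega

-- handshake: 2 * |inducedEdges| ≤ k * |T| when T is k-dependent

lemma handshake (G : SimpleGraph V) (k : ℕ) (T : Finset V)
    (hdep : KDepSet G k T) :
    2 * (inducedEdges G T).card ≤ k * T.card := by
  classical
  have key : ∑ e ∈ inducedEdges G T, (T.filter (fun v => v ∈ e)).card
      = ∑ v ∈ T, ((inducedEdges G T).filter (fun e => v ∈ e)).card := by
    simp only [Finset.card_filter]
    rw [Finset.sum_comm]
  have h2 : ∀ e ∈ inducedEdges G T, (T.filter (fun v => v ∈ e)).card = 2 := by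
    intro e he
    rw [inducedEdges, Finset.mem_filter] at he
    obtain ⟨heG, hin⟩ := he
    have hnd : ¬ e.IsDiag :=
      G.not_isDiag_of_mem_edgeSet (SimpleGraph.mem_edgeFinset.1 heG)
    induction e using Sym2.ind with
    | _ a b =>
      have hab : a ≠ b := by
        intro h; exact hnd (by rw [h]; exact Sym2.mk_isDiag_iff.2 rfl)
      have : T.filter (fun v => v ∈ s(a, b)) = {a, b} := by
        ext v
        simp only [Finset.mem_filter, Sym2.mem_iff, Finset.mem_insert, Finset.mem_singleton]
        constructor
        · rintro ⟨_, h | h⟩ <;> [left; right] <;> exact h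
        · rintro (h | h) <;> rw [h]
          · exact ⟨hin a (Sym2.mem_mk_left a b), Or.inl rfl⟩
          · exact ⟨hin b (Sym2.mem_mk_right a b), Or.inr rfl⟩
      rw [this, Finset.card_pair hab]
  have h3 : ∀ v ∈ T, ((inducedEdges G T).filter (fun e => v ∈ e)).card
      ≤ (T.filter (fun w => G.Adj v w)).card := by
    intro v hv
    apply Finset.card_le_card_of_injOn (fun e => if h : v ∈ e then Sym2.Mem.other h else v)
    · intro e he
      rw [Finset.mem_coe, Finset.mem_filter] at he
      obtain ⟨heI, hve⟩ := he
      dsimp only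
      rw [dif_pos hve]
      rw [inducedEdges, Finset.mem_filter] at heI
      have ho : Sym2.Mem.other hve ∈ e := Sym2.other_mem hve
      rw [Finset.mem_coe, Finset.mem_filter]
      refine ⟨heI.2 _ ho, ?_⟩
      have hspec : s(v, Sym2.Mem.other hve) = e := Sym2.other_spec hve
      have : s(v, Sym2.Mem.other hve) ∈ G.edgeSet := by
        rw [hspec]; exact SimpleGraph.mem_edgeFinset.1 heI.1
      exact this
    · intro e he f hf heq
      rw [Finset.mem_coe, Finset.mem_filter] at he hf
      dsimp only at heq
      rw [dif_pos he.2, dif_pos hf.2] at heq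
      rw [← Sym2.other_spec he.2, ← Sym2.other_spec hf.2, heq]
  calc 2 * (inducedEdges G T).card
      = ∑ e ∈ inducedEdges G T, 2 := by rw [Finset.sum_const, smul_eq_mul, mul_comm]
    _ = ∑ e ∈ inducedEdges G T, (T.filter (fun v => v ∈ e)).card := by
        apply Finset.sum_congr rfl; intro e he; rw [h2 e he]
    _ = ∑ v ∈ T, ((inducedEdges G T).filter (fun e => v ∈ e)).card := key
    _ ≤ ∑ v ∈ T, k := by
        apply Finset.sum_le_sum; intro v hv; exact le_trans (h3 v hv) (hdep v hv)
    _ = k * T.card := by rw [Finset.sum_const, smul_eq_mul, mul_comm]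

lemma fin2_iff (x y : Fin 2) (h : x ≠ y) : (x = 0 ↔ ¬ y = 0) := by
  fin_cases x <;> fin_cases y <;> simp_all

-- Hall-based half matching: matches all of A = (univ \ S) ∩ {p} into S ∩ {¬p}

lemma halfmatch (H : SimpleGraph V) (S : Finset V)
    (hind : IsIndepF H S) (hmax : ∀ S', IsIndepF H S' → S'.card ≤ S.card)
    (p : V → Prop) (hp : ∀ u w, H.Adj u w → (p u ↔ ¬ p w))
    (A : Finset V) (hA : ∀ v, v ∈ A ↔ (v ∉ S ∧ p v)) :
    ∃ f : {x // x ∈ A} → V, Function.Injective f ∧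
      ∀ a, f a ∈ S ∧ H.Adj a.1 (f a) ∧ ¬ p (f a) := by
  classical
  set t : {x // x ∈ A} → Finset V :=
    fun a => S.filter (fun b => H.Adj a.1 b ∧ ¬ p b) with ht
  have htmem : ∀ (a : {x // x ∈ A}) (b : V),
      b ∈ t a ↔ (b ∈ S ∧ H.Adj a.1 b ∧ ¬ p b) := by
    intro a b
    simp only [ht, Finset.mem_filter]
  have hAmem : ∀ a : {x // x ∈ A}, (a : V) ∉ S ∧ p (a : V) := fun a => (hA _).1 a.2
  have hall : ∀ s : Finset {x // x ∈ A}, s.card ≤ (s.biUnion t).card := by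
    by_contra hcon
    push_neg at hcon
    obtain ⟨s, hlt⟩ := hcon
    set NB := s.biUnion t with hNB
    set X := s.image (fun a => a.1) with hX
    have hXcard : X.card = s.card := Finset.card_image_of_injective _ Subtype.val_injective
    have hXprop : ∀ x ∈ X, x ∉ S ∧ p x := by
      intro x hx
      rw [hX, Finset.mem_image] at hx
      obtain ⟨a, _, rfl⟩ := hx
      exact hAmem a
    have hNBS : NB ⊆ S := by
      intro b hb
      rw [hNB, Finset.mem_biUnion] at hb
      obtain ⟨a, _, hb⟩ := hb
      exact ((htmem a b).1 hb).1
    have hindep : IsIndepF H ((S \ NB) ∪ X) := by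
      intro u hu w hw hadj
      rw [Finset.mem_union] at hu hw
      rcases hu with hu | hu <;> rcases hw with hw | hw
      · exact hind u ((Finset.mem_sdiff.1 hu).1) w ((Finset.mem_sdiff.1 hw).1) hadj
      · -- u ∈ S \ NB, w ∈ X
        have hpw := (hXprop w hw).2
        have hnpu : ¬ p u := by have := hp w u hadj.symm; tauto
        rw [hX, Finset.mem_image] at hw
        obtain ⟨a, ha, rfl⟩ := hw
        have hmem : u ∈ t a := (htmem a u).2 ⟨(Finset.mem_sdiff.1 hu).1, hadj.symm, hnpu⟩
        have : u ∈ NB := by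
          rw [hNB, Finset.mem_biUnion]; exact ⟨a, ha, hmem⟩
        exact (Finset.mem_sdiff.1 hu).2 this
      · -- u ∈ X, w ∈ S \ NB
        have hpu := (hXprop u hu).2
        have hnpw : ¬ p w := by have := hp u w hadj; tauto
        rw [hX, Finset.mem_image] at hu
        obtain ⟨a, ha, rfl⟩ := hu
        have hmem : w ∈ t a := (htmem a w).2 ⟨(Finset.mem_sdiff.1 hw).1, hadj, hnpw⟩
        have : w ∈ NB := by
          rw [hNB, Finset.mem_biUnion]; exact ⟨a, ha, hmem⟩
        exact (Finset.mem_sdiff.1 hw).2 this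
      · -- both in X
        have h1 := (hXprop u hu).2
        have h2 := (hXprop w hw).2
        have := hp u w hadj
        tauto
    have hdisj : Disjoint (S \ NB) X := by
      rw [Finset.disjoint_right]
      intro x hx hmem
      exact (hXprop x hx).1 (Finset.mem_sdiff.1 hmem).1
    have hcard : ((S \ NB) ∪ X).card = (S \ NB).card + X.card :=
      Finset.card_union_of_disjoint hdisj
    have h1 : (S \ NB).card = S.card - NB.card := Finset.card_sdiff_of_subset hNBS
    have h2 : NB.card ≤ S.card := Finset.card_le_card hNBS
    have := hmax _ hindep
    rw [hcard, h1, hXcard] at this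
    omega
  obtain ⟨f, hfinj, hft⟩ := (Finset.all_card_le_biUnion_card_iff_exists_injective t).mp hall
  refine ⟨f, hfinj, fun a => ?_⟩
  exact (htmem a (f a)).1 (hft a)

lemma konig (H G : SimpleGraph V) (hHG : H ≤ G)
    (c : G.Coloring (Fin 2)) (S : Finset V) (hS : IsMaxIndepF H S) :
    ∃ N : Finset (Sym2 V), IsMatchingE H N ∧ S.card + N.card = Fintype.card V := by
  classical
  obtain ⟨hind, hmax⟩ := hS
  set A0 : Finset V := (Finset.univ \ S).filter (fun v => c v = 0) with hA0def
  set A1 : Finset V := (Finset.univ \ S).filter (fun v => ¬ c v = 0) with hA1def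
  have hp0 : ∀ u w, H.Adj u w → ((c u = 0) ↔ ¬ (c w = 0)) :=
    fun u w h => fin2_iff _ _ (c.valid (hHG h))
  have hp1 : ∀ u w, H.Adj u w → ((¬ c u = 0) ↔ ¬ ¬ (c w = 0)) := by
    intro u w h
    have h1 := fin2_iff (c w) (c u) (Ne.symm (c.valid (hHG h)))
    tauto
  have hA0iff : ∀ v, v ∈ A0 ↔ (v ∉ S ∧ c v = 0) := by
    intro v
    rw [hA0def, Finset.mem_filter, Finset.mem_sdiff]
    simp [Finset.mem_univ]
  have hA1iff : ∀ v, v ∈ A1 ↔ (v ∉ S ∧ ¬ c v = 0) := by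
    intro v
    rw [hA1def, Finset.mem_filter, Finset.mem_sdiff]
    simp [Finset.mem_univ]
  obtain ⟨f0, hf0inj, hf0⟩ := halfmatch H S hind hmax (fun v => c v = 0) hp0 A0 hA0iff
  obtain ⟨f1, hf1inj, hf1⟩ := halfmatch H S hind hmax (fun v => ¬ c v = 0) hp1 A1 hA1iff
  have hA0mem : ∀ a : {x // x ∈ A0}, (a:V) ∉ S ∧ c (a:V) = 0 := fun a => (hA0iff _).1 a.2
  have hA1mem : ∀ b : {x // x ∈ A1}, (b:V) ∉ S ∧ ¬ c (b:V) = 0 := fun b => (hA1iff _).1 b.2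
  set N0 := A0.attach.image (fun a => s(a.1, f0 a)) with hN0def
  set N1 := A1.attach.image (fun b => s(b.1, f1 b)) with hN1def
  have hN0mem : ∀ e ∈ N0, ∃ a : {x // x ∈ A0}, e = s(a.1, f0 a) := by
    intro e he
    rw [hN0def, Finset.mem_image] at he
    obtain ⟨a, _, rfl⟩ := he
    exact ⟨a, rfl⟩
  have hN1mem : ∀ e ∈ N1, ∃ b : {x // x ∈ A1}, e = s(b.1, f1 b) := by
    intro e he
    rw [hN1def, Finset.mem_image] at he
    obtain ⟨b, _, rfl⟩ := he
    exact ⟨b, rfl⟩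
  have hpair0 : ∀ (a a' : {x // x ∈ A0}) (v : V), a ≠ a' →
      v ∈ s(a.1, f0 a) → v ∈ s(a'.1, f0 a') → False := by
    intro a a' v hne hv1 hv2
    rw [Sym2.mem_iff] at hv1 hv2
    rcases hv1 with rfl | rfl <;> rcases hv2 with h | h
    · exact hne (Subtype.ext h)
    · exact ((hA0mem a).1) (h ▸ (hf0 a').1)
    · exact ((hA0mem a').1) (h ▸ (hf0 a).1)
    · exact hne (hf0inj h)
  have hpair1 : ∀ (b b' : {x // x ∈ A1}) (v : V), b ≠ b' →
      v ∈ s(b.1, f1 b) → v ∈ s(b'.1, f1 b') → False := by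
    intro b b' v hne hv1 hv2
    rw [Sym2.mem_iff] at hv1 hv2
    rcases hv1 with rfl | rfl <;> rcases hv2 with h | h
    · exact hne (Subtype.ext h)
    · exact ((hA1mem b).1) (h ▸ (hf1 b').1)
    · exact ((hA1mem b').1) (h ▸ (hf1 b).1)
    · exact hne (hf1inj h)
  have hcross : ∀ (a : {x // x ∈ A0}) (b : {x // x ∈ A1}) (v : V),
      v ∈ s(a.1, f0 a) → v ∈ s(b.1, f1 b) → False := by
    intro a b v hv1 hv2
    rw [Sym2.mem_iff] at hv1 hv2
    rcases hv1 with rfl | rfl <;> rcases hv2 with h | h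
    · exact (hA1mem b).2 (h ▸ (hA0mem a).2)
    · exact (hA0mem a).1 (h ▸ (hf1 b).1)
    · exact (hA1mem b).1 (h.symm ▸ (hf0 a).1)
    · have h1 := (hf0 a).2.2
      have h2 := (hf1 b).2.2
      rw [h] at h1
      tauto
  have hmatch : IsMatchingE H (N0 ∪ N1) := by
    constructor
    · intro e he
      rw [Finset.coe_union, Set.mem_union] at he
      rcases he with he | he
      · obtain ⟨a, rfl⟩ := hN0mem e he
        exact (hf0 a).2.1
      · obtain ⟨b, rfl⟩ := hN1mem e he
        exact (hf1 b).2.1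
    · intro e he f hf hne v hve hvf
      rw [Finset.mem_coe, Finset.mem_union] at he hf
      rcases he with he | he <;> rcases hf with hf | hf
      · obtain ⟨a, rfl⟩ := hN0mem e he
        obtain ⟨a', rfl⟩ := hN0mem f hf
        have hane : a ≠ a' := by rintro rfl; exact hne rfl
        exact hpair0 a a' v hane hve hvf
      · obtain ⟨a, rfl⟩ := hN0mem e he
        obtain ⟨b, rfl⟩ := hN1mem f hf
        exact hcross a b v hve hvf
      · obtain ⟨b, rfl⟩ := hN1mem e he
        obtain ⟨a, rfl⟩ := hN0mem f hf
        exact hcross a b v hvf hve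
      · obtain ⟨b, rfl⟩ := hN1mem e he
        obtain ⟨b', rfl⟩ := hN1mem f hf
        have hbne : b ≠ b' := by rintro rfl; exact hne rfl
        exact hpair1 b b' v hbne hve hvf
  have hcard0 : N0.card = A0.card := by
    rw [hN0def]
    rw [Finset.card_image_of_injOn]
    · exact Finset.card_attach
    · intro a _ a' _ h
      dsimp only at h
      by_contra hne
      exact hpair0 a a' a.1 hne (Sym2.mem_mk_left _ _) (h ▸ Sym2.mem_mk_left _ _)
  have hcard1 : N1.card = A1.card := by
    rw [hN1def]
    rw [Finset.card_image_of_injOn]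
    · exact Finset.card_attach
    · intro b _ b' _ h
      dsimp only at h
      by_contra hne
      exact hpair1 b b' b.1 hne (Sym2.mem_mk_left _ _) (h ▸ Sym2.mem_mk_left _ _)
  have hdisjN : Disjoint N0 N1 := by
    rw [Finset.disjoint_left]
    intro e he0 he1
    obtain ⟨a, rfl⟩ := hN0mem e he0
    obtain ⟨b, heq⟩ := hN1mem _ he1
    exact hcross a b a.1 (Sym2.mem_mk_left _ _) (heq ▸ Sym2.mem_mk_left _ _)
  have hcardN : (N0 ∪ N1).card = A0.card + A1.card := by
    rw [Finset.card_union_of_disjoint hdisjN, hcard0, hcard1]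
  have hsplitC : A0.card + A1.card = (Finset.univ \ S).card := by
    rw [hA0def, hA1def]
    exact Finset.card_filter_add_card_filter_not (fun v => c v = 0)
  have hC : (Finset.univ \ S).card + S.card = Fintype.card V := by
    rw [← Finset.card_univ]
    exact Finset.card_sdiff_add_card_eq_card (Finset.subset_univ S)
  exact ⟨N0 ∪ N1, hmatch, by omega⟩

theorem stmt9 (G : SimpleGraph V) (hG : G.Colorable 2) (k : ℕ) (hk : 1 ≤ k)
    (M : ℕ → Finset (Sym2 V)) (hM : ∀ i < k, IsMaxMatchingE (resid G M i) (M i))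
    (S : Finset V) (hS : IsMaxIndepF (resid G M k) S)
    (Istar : Finset V) (hIstar : IsMaxKDep G k Istar) :
    KDepSet G k S ∧ (Istar.card : ℝ) ≤ (1 + k/(k+2)) * S.card := by
  classical
  have hMm : ∀ i < k, (((M i) : Set (Sym2 V)).Pairwise fun e f => ∀ v, v ∈ e → v ∉ f) :=
    fun i hi => (hM i hi).1.2
  have hkdep : KDepSet G k S := partA G k M hMm S hS.1
  refine ⟨hkdep, ?_⟩
  obtain ⟨c⟩ := hG
  obtain ⟨N, hNmatch, hNcard⟩ := konig (resid G M k) G (resid_le G M k) c S hS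
  -- N has size ≤ each M i
  have hNle : ∀ i, i < k → N.card ≤ (M i).card := by
    intro i hi
    apply (hM i hi).2
    exact ⟨Set.Subset.trans hNmatch.1 (resid_mono G M (le_of_lt hi)), hNmatch.2⟩
  -- edges of M j are not in M i for i < j, nor in N
  have hMnot : ∀ i j, i < j → j < k → ∀ e ∈ M j, e ∉ M i := by
    intro i j hij hjk e hej hei
    have hsub := (hM j hjk).1.1 (Finset.mem_coe.2 hej)
    rw [resid_edgeSet] at hsub
    exact hsub.2 (Set.mem_biUnion (Set.mem_Iio.2 hij) (Finset.mem_coe.2 hei))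
  have hNnot : ∀ i, i < k → ∀ e ∈ N, e ∉ M i := by
    intro i hi e hej hei
    have hsub := hNmatch.1 (Finset.mem_coe.2 hej)
    rw [resid_edgeSet] at hsub
    exact hsub.2 (Set.mem_biUnion (Set.mem_Iio.2 hi) (Finset.mem_coe.2 hei))
  -- internal edges
  have hWi : ∀ i, i < k → (M i).card ≤
      ((M i).filter fun e => ∀ v ∈ e, v ∈ Istar).card + (Finset.univ \ Istar).card :=
    fun i hi => wbound Istar (M i) (hMm i hi)
  have hWN : N.card ≤
      (N.filter fun e => ∀ v ∈ e, v ∈ Istar).card + (Finset.univ \ Istar).card :=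
    wbound Istar N hNmatch.2
  -- the union of all internal parts sits in inducedEdges G Istar
  have hMedge : ∀ i, i < k → ∀ e ∈ M i, e ∈ G.edgeSet := by
    intro i hi e he
    have hsub := (hM i hi).1.1 (Finset.mem_coe.2 he)
    rw [resid_edgeSet] at hsub
    exact hsub.1
  have hNedge : ∀ e ∈ N, e ∈ G.edgeSet := by
    intro e he
    have hsub := hNmatch.1 (Finset.mem_coe.2 he)
    rw [resid_edgeSet] at hsub
    exact hsub.1
  have hUsub : (((Finset.range k).biUnion fun i => (M i).filter fun e => ∀ v ∈ e, v ∈ Istar)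
      ∪ (N.filter fun e => ∀ v ∈ e, v ∈ Istar)) ⊆ inducedEdges G Istar := by
    intro e he
    rw [Finset.mem_union] at he
    rcases he with he | he
    · rw [Finset.mem_biUnion] at he
      obtain ⟨i, hi, he⟩ := he
      rw [Finset.mem_filter] at he
      rw [inducedEdges, Finset.mem_filter]
      exact ⟨SimpleGraph.mem_edgeFinset.2 (hMedge i (Finset.mem_range.1 hi) e he.1), he.2⟩
    · rw [Finset.mem_filter] at he
      rw [inducedEdges, Finset.mem_filter]
      exact ⟨SimpleGraph.mem_edgeFinset.2 (hNedge e he.1), he.2⟩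
  have hdisjMM : ∀ i ∈ Finset.range k, ∀ j ∈ Finset.range k, i ≠ j →
      Disjoint ((M i).filter fun e => ∀ v ∈ e, v ∈ Istar)
               ((M j).filter fun e => ∀ v ∈ e, v ∈ Istar) := by
    intro i hi j hj hne
    rw [Finset.disjoint_left]
    intro e hei hej
    rw [Finset.mem_filter] at hei hej
    rcases lt_or_gt_of_ne hne with h | h
    · exact hMnot i j h (Finset.mem_range.1 hj) e hej.1 hei.1
    · exact hMnot j i h (Finset.mem_range.1 hi) e hei.1 hej.1
  have hdisjUN : Disjoint ((Finset.range k).biUnion fun i => (M i).filter fun e => ∀ v ∈ e, v ∈ Istar)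
      (N.filter fun e => ∀ v ∈ e, v ∈ Istar) := by
    rw [Finset.disjoint_left]
    intro e hei hej
    rw [Finset.mem_biUnion] at hei
    obtain ⟨i, hi, hei⟩ := hei
    rw [Finset.mem_filter] at hei hej
    exact hNnot i (Finset.mem_range.1 hi) e hej.1 hei.1
  have hcardBi : ((Finset.range k).biUnion fun i => (M i).filter fun e => ∀ v ∈ e, v ∈ Istar).card
      = ∑ i ∈ Finset.range k, ((M i).filter fun e => ∀ v ∈ e, v ∈ Istar).card :=
    Finset.card_biUnion hdisjMM
  have hcardU : (((Finset.range k).biUnion fun i => (M i).filter fun e => ∀ v ∈ e, v ∈ Istar)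
      ∪ (N.filter fun e => ∀ v ∈ e, v ∈ Istar)).card
      = (∑ i ∈ Finset.range k, ((M i).filter fun e => ∀ v ∈ e, v ∈ Istar).card)
        + (N.filter fun e => ∀ v ∈ e, v ∈ Istar).card := by
    rw [Finset.card_union_of_disjoint hdisjUN, hcardBi]
  have hhs : 2 * (inducedEdges G Istar).card ≤ k * Istar.card :=
    handshake G k Istar hIstar.1
  have hUle : (∑ i ∈ Finset.range k, ((M i).filter fun e => ∀ v ∈ e, v ∈ Istar).card)
      + (N.filter fun e => ∀ v ∈ e, v ∈ Istar).card ≤ (inducedEdges G Istar).card := by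
    rw [← hcardU]
    exact Finset.card_le_card hUsub
  -- sum the per-round inequalities
  have hsum : k * N.card ≤ (∑ i ∈ Finset.range k, ((M i).filter fun e => ∀ v ∈ e, v ∈ Istar).card)
      + k * (Finset.univ \ Istar).card := by
    calc k * N.card = ∑ _i ∈ Finset.range k, N.card := by
          rw [Finset.sum_const, Finset.card_range, smul_eq_mul]
      _ ≤ ∑ i ∈ Finset.range k, (((M i).filter fun e => ∀ v ∈ e, v ∈ Istar).card
            + (Finset.univ \ Istar).card) := by
          apply Finset.sum_le_sum
          intro i hi
          exact le_trans (hNle i (Finset.mem_range.1 hi)) (hWi i (Finset.mem_range.1 hi))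
      _ = (∑ i ∈ Finset.range k, ((M i).filter fun e => ∀ v ∈ e, v ∈ Istar).card)
            + k * (Finset.univ \ Istar).card := by
          rw [Finset.sum_add_distrib, Finset.sum_const, Finset.card_range, smul_eq_mul]
  -- master inequality over ℕ
  have master : 2 * ((k+1) * N.card) ≤ k * Istar.card + 2 * ((k+1) * (Finset.univ \ Istar).card) := by
    have h1 : (k+1) * N.card ≤ (∑ i ∈ Finset.range k, ((M i).filter fun e => ∀ v ∈ e, v ∈ Istar).card)
        + (N.filter fun e => ∀ v ∈ e, v ∈ Istar).card + (k+1) * (Finset.univ \ Istar).card := by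
      have := hWN
      have := hsum
      ring_nf
      nlinarith [hWN, hsum]
    nlinarith [hUle, hhs, h1]
  -- cardinal identities
  have hC : (Finset.univ \ Istar).card + Istar.card = Fintype.card V := by
    rw [← Finset.card_univ]
    exact Finset.card_sdiff_add_card_eq_card (Finset.subset_univ Istar)
  -- move to ℝ
  have hk2 : (0:ℝ) < (k:ℝ) + 2 := by positivity
  have masterR : 2 * (((k:ℝ)+1) * N.card) ≤ (k:ℝ) * Istar.card
      + 2 * (((k:ℝ)+1) * ((Finset.univ \ Istar).card : ℝ)) := by
    exact_mod_cast master
  have hNcardR : (S.card : ℝ) + (N.card : ℝ) = (Fintype.card V : ℝ) := by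
    exact_mod_cast hNcard
  have hCR : ((Finset.univ \ Istar).card : ℝ) + (Istar.card : ℝ) = (Fintype.card V : ℝ) := by
    exact_mod_cast hC
  have key : ((k:ℝ)+2) * Istar.card ≤ (2*(k:ℝ)+2) * S.card := by nlinarith [masterR, hNcardR, hCR]
  have hform : (1 + (k:ℝ)/((k:ℝ)+2)) = (2*(k:ℝ)+2)/((k:ℝ)+2) := by
    field_simp
    ring
  rw [hform, div_mul_eq_mul_div, le_div_iff₀ hk2]
  nlinarith [key]
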